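/- The value of every average-time game on a timed automaton is regionally constant: for all states s and s' of the timed automaton lying in the same region, val^T(s) = val^T(s'). -/

import Mathlib

noncomputable section

attribute [local instance] Classical.propDecidable

/-- A two-player (Min/Max) game arena with real-valued step costs. -/
structure Arena (Conf Move : Type) where
  Tr : Conf → Move → Conf → Prop
  cost : Conf → Move → ℝ
  IsMin : Conf → Prop

namespace Arena

variable {Conf Move : Type}

/-- A finite run in the arena. -/
structure FinRun (G : Arena Conf Move) where
  n : ℕ
  q : Fin (n + 1) → Conf
  m : Fin n → Move
  valid : ∀ i : Fin n, G.Tr (q i.castSucc) (m i) (q i.succ)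

/-- The last configuration of a finite run. -/
def FinRun.last {G : Arena Conf Move} (r : G.FinRun) : Conf := r.q (Fin.last r.n)

/-- The first configuration of a finite run. -/
def FinRun.first {G : Arena Conf Move} (r : G.FinRun) : Conf := r.q 0

/-- The trivial run consisting of a single configuration. -/
def single (G : Arena Conf Move) (q0 : Conf) : G.FinRun :=
  ⟨0, fun _ => q0, Fin.elim0, fun i => i.elim0⟩

/-- Extending a finite run by one transition. -/
def FinRun.extend {G : Arena Conf Move} (r : G.FinRun) (mv : Move) (q' : Conf)
    (h : G.Tr r.last mv q') : G.FinRun where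
  n := r.n + 1
  q := Fin.snoc r.q q'
  m := Fin.snoc r.m mv
  valid := by
    intro i
    induction i using Fin.lastCases with
    | last =>
        simpa [FinRun.last, Fin.snoc_castSucc, Fin.succ_last, Fin.snoc_last] using h
    | cast j =>
        have hv := r.valid j
        rw [Fin.succ_castSucc]
        simp only [Fin.snoc_castSucc]
        exact hv

/-- Strategies of player Min: mappings from finite runs to moves that are
available whenever the last configuration belongs to Min. -/
def MinStrategy (G : Arena Conf Move) : Type :=
  {σ : G.FinRun → Move // ∀ r : G.FinRun, G.IsMin r.last → ∃ q', G.Tr r.last (σ r) q'}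

/-- Strategies of player Max. -/
def MaxStrategy (G : Arena Conf Move) : Type :=
  {σ : G.FinRun → Move // ∀ r : G.FinRun, ¬ G.IsMin r.last → ∃ q', G.Tr r.last (σ r) q'}

/-- A strategy is positional if its choice depends only on the last configuration. -/
def Positional {G : Arena Conf Move} (σ : G.FinRun → Move) : Prop :=
  ∀ r r' : G.FinRun, r.last = r'.last → σ r = σ r'

/-- The finite prefixes of the unique play from `q0` in which Min uses `μ`
and Max uses `χ`. -/
def play (G : Arena Conf Move) (μ : G.MinStrategy) (χ : G.MaxStrategy) (q0 : Conf) :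
    ℕ → G.FinRun
  | 0 => G.single q0
  | n + 1 =>
    let r := G.play μ χ q0 n
    if h : G.IsMin r.last then
      r.extend (μ.1 r) (Classical.choose (μ.2 r h)) (Classical.choose_spec (μ.2 r h))
    else
      r.extend (χ.1 r) (Classical.choose (χ.2 r h)) (Classical.choose_spec (χ.2 r h))

/-- Total cost (e.g. total time) of a finite run. -/
def FinRun.time {G : Arena Conf Move} (r : G.FinRun) : ℝ :=
  ∑ i : Fin r.n, G.cost (r.q i.castSucc) (r.m i)

/-- Payoff of player Min (to be minimised): limsup of average cost. -/
def AMin (G : Arena Conf Move) (q0 : Conf) (μ : G.MinStrategy) (χ : G.MaxStrategy) : ℝ :=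
  Filter.limsup (fun n : ℕ => (G.play μ χ q0 n).time / n) Filter.atTop

/-- Payoff of player Max (to be maximised): liminf of average cost. -/
def AMax (G : Arena Conf Move) (q0 : Conf) (μ : G.MinStrategy) (χ : G.MaxStrategy) : ℝ :=
  Filter.liminf (fun n : ℕ => (G.play μ χ q0 n).time / n) Filter.atTop

/-- Upper value of the game at `q0`. -/
def upperVal (G : Arena Conf Move) (q0 : Conf) : ℝ :=
  ⨅ μ : G.MinStrategy, ⨆ χ : G.MaxStrategy, G.AMin q0 μ χ

/-- Lower value of the game at `q0`. -/
def lowerVal (G : Arena Conf Move) (q0 : Conf) : ℝ :=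
  ⨆ χ : G.MaxStrategy, ⨅ μ : G.MinStrategy, G.AMax q0 μ χ

/-- The value of the game at `q0` (meaningful when the game is determined). -/
def val (G : Arena Conf Move) (q0 : Conf) : ℝ := G.upperVal q0

end Arena
/-- `k`-bounded clock valuations. -/
def IsVal (k : ℕ) {C : Type} (ν : C → ℝ) : Prop := ∀ c, 0 ≤ ν c ∧ ν c ≤ (k : ℝ)

/-- Two clock valuations satisfy exactly the same simple clock constraints
`c ⋈ i` and `c − c' ⋈ i` with `i ∈ {0,…,k}` and `⋈ ∈ {<,=,>}` (hence also ≤, ≥). -/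
def RegEq (k : ℕ) {C : Type} (ν ν' : C → ℝ) : Prop :=
  ∀ i : ℕ, i ≤ k → ∀ c c' : C,
    ((ν c < (i : ℝ) ↔ ν' c < (i : ℝ)) ∧ (ν c = (i : ℝ) ↔ ν' c = (i : ℝ)) ∧
      ((i : ℝ) < ν c ↔ (i : ℝ) < ν' c)) ∧
    ((ν c - ν c' < (i : ℝ) ↔ ν' c - ν' c' < (i : ℝ)) ∧
      (ν c - ν c' = (i : ℝ) ↔ ν' c - ν' c' = (i : ℝ)) ∧
      ((i : ℝ) < ν c - ν c' ↔ (i : ℝ) < ν' c - ν' c'))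

/-- An average-time game on a (bounded) timed automaton: a timed automaton
together with a partition of locations between players Min and Max. -/
structure TimedGame where
  L : Type
  C : Type
  A : Type
  finL : Finite L
  finC : Finite C
  finA : Finite A
  k : ℕ
  S : Set (L × (C → ℝ))
  En : A → Set (L × (C → ℝ))
  δ : L → A → L
  ϱ : A → Set C
  LMin : Set L
  bounded : ∀ s ∈ S, IsVal k s.2
  S_zone : (∀ (ℓ : L) (ν ν' : C → ℝ), RegEq k ν ν' → ((ℓ, ν) ∈ S ↔ (ℓ, ν') ∈ S)) ∧
    ∀ ℓ : L, Convex ℝ {ν : C → ℝ | (ℓ, ν) ∈ S}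
  En_sub : ∀ a, En a ⊆ S
  En_zone : ∀ a : A,
    (∀ (ℓ : L) (ν ν' : C → ℝ), RegEq k ν ν' → ((ℓ, ν) ∈ En a ↔ (ℓ, ν') ∈ En a)) ∧
    ∀ ℓ : L, Convex ℝ {ν : C → ℝ | (ℓ, ν) ∈ En a}
  nonstuck : ∀ s ∈ S, ∃ (t : ℝ) (a : A), 0 ≤ t ∧
    (∀ t', 0 ≤ t' → t' ≤ t → (s.1, fun c => s.2 c + t') ∈ S) ∧
    ((s.1, fun c => s.2 c + t) ∈ En a) ∧
    ((δ s.1 a, fun c => if c ∈ ϱ a then 0 else s.2 c + t) ∈ S)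

namespace TimedGame

/-- Configurations of the timed automaton. -/
abbrev Q (T : TimedGame) : Type := T.L × (T.C → ℝ)

/-- Resetting the clocks in `X` to zero. -/
def resetv (T : TimedGame) (ν : T.C → ℝ) (X : Set T.C) : T.C → ℝ :=
  fun c => if c ∈ X then 0 else ν c

/-- The successor configuration after the timed action `τ = (t, a)`. -/
def tsucc (T : TimedGame) (s : T.Q) (τ : ℝ × T.A) : T.Q :=
  (T.δ s.1 τ.2, T.resetv (fun c => s.2 c + τ.1) (T.ϱ τ.2))

/-- The transition relation `s →_τ s'` of the timed automaton. -/
def Trans (T : TimedGame) (s : T.Q) (τ : ℝ × T.A) (s' : T.Q) : Prop :=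
  0 ≤ τ.1 ∧ (∀ t', 0 ≤ t' → t' ≤ τ.1 → (s.1, fun c => s.2 c + t') ∈ T.S) ∧
  ((s.1, fun c => s.2 c + τ.1) ∈ T.En τ.2) ∧ s' = T.tsucc s τ ∧ s' ∈ T.S

/-- The game arena of the average-time game played on the timed automaton. -/
def taArena (T : TimedGame) : Arena {s : T.Q // s ∈ T.S} (ℝ × T.A) where
  Tr := fun s τ s' => T.Trans s.1 τ s'.1
  cost := fun _ τ => τ.1
  IsMin := fun s => s.1.1 ∈ T.LMin

/-- A clock region: an equivalence class of the region equivalence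
(restricted to `k`-bounded valuations). -/
def IsClockRegion (T : TimedGame) (P : Set (T.C → ℝ)) : Prop :=
  ∃ ν : T.C → ℝ, P = {ν' | IsVal T.k ν' ∧ RegEq T.k ν ν'}

/-- Regions: pairs of a location and a clock region. -/
def Region (T : TimedGame) : Type :=
  T.L × {P : Set (T.C → ℝ) // T.IsClockRegion P}

/-- The clock region of a valuation. -/
def clockRegionOf (T : TimedGame) (ν : T.C → ℝ) : {P : Set (T.C → ℝ) // T.IsClockRegion P} :=
  ⟨{ν' | IsVal T.k ν' ∧ RegEq T.k ν ν'}, ⟨ν, rfl⟩⟩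

/-- The region `[s]` of a configuration `s`. -/
def regionOf (T : TimedGame) (s : T.Q) : T.Region := (s.1, T.clockRegionOf s.2)

/-- The configurations `Ω` of the region graphs: pairs of a configuration
of the timed automaton and a region. -/
abbrev Omega (T : TimedGame) : Type := T.Q × T.Region

/-- `(s, (ℓ, P))` is a state of the closed region graph: the locations match
and `s`'s valuation lies in the closure of the clock region `P`. -/
def barS (T : TimedGame) (q : T.Omega) : Prop :=
  q.1.1 = q.2.1 ∧ q.1.2 ∈ closure q.2.2.1

/-- `(s, (ℓ, P))` is a state of the region graph: the locations match and
`s`'s valuation lies in the clock region `P`. -/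
def tildeS (T : TimedGame) (q : T.Omega) : Prop :=
  q.1.1 = q.2.1 ∧ q.1.2 ∈ q.2.2.1

/-- `R →_* R'` : the region `R'` is a time successor of `R`. -/
def timeSucc (T : TimedGame) (R R' : T.Region) : Prop :=
  R.1 = R'.1 ∧ ∀ ν ∈ R.2.1, ∃ t : ℝ, 0 ≤ t ∧
    (∀ t', 0 ≤ t' → t' ≤ t → (R.1, fun c => ν c + t') ∈ T.S) ∧
    (fun c => ν c + t) ∈ R'.2.1

/-- The discrete transition `s →^a s'` of the timed automaton. -/
def astep (T : TimedGame) (s : T.Q) (a : T.A) (s' : T.Q) : Prop :=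
  s ∈ T.S ∧ s' ∈ T.S ∧ s ∈ T.En a ∧ s' = (T.δ s.1 a, T.resetv s.2 (T.ϱ a))

/-- `R →^a R'` at the level of regions. -/
def regAct (T : TimedGame) (R : T.Region) (a : T.A) (R' : T.Region) : Prop :=
  ∃ ν ∈ R.2.1, ∃ ν' ∈ R'.2.1, T.astep (R.1, ν) a (R'.1, ν')

/-- Moves of the region graphs: a delay, an intermediate region, and an action. -/
abbrev RMove (T : TimedGame) : Type := ℝ × T.Region × T.A

/-- Transitions underlying pre-runs: `(s', R') = succ((s,R), (t,R'',a))` with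
`R →_* R'' →^a R'`. -/
def preTrans (T : TimedGame) (q : T.Omega) (m : T.RMove) (q' : T.Omega) : Prop :=
  0 ≤ m.1 ∧ T.timeSucc q.2 m.2.1 ∧ T.regAct m.2.1 m.2.2 q'.2 ∧
  q'.1 = T.tsucc q.1 (m.1, m.2.2)

/-- Labelled transitions of the closed region graph `T̄`. -/
def cTrans (T : TimedGame) (q : T.Omega) (m : T.RMove) (q' : T.Omega) : Prop :=
  T.preTrans q m q' ∧ T.barS q ∧ T.barS q' ∧
  (fun c => q.1.2 c + m.1) ∈ closure m.2.1.2.1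

/-- Labelled transitions of the boundary region graph `T̂`: additionally the
intermediate valuation lies on the boundary of the intermediate region. -/
def bTrans (T : TimedGame) (q : T.Omega) (m : T.RMove) (q' : T.Omega) : Prop :=
  T.cTrans q m q' ∧ (fun c => q.1.2 c + m.1) ∈ frontier m.2.1.2.1

/-- Labelled transitions of the region graph `T̃`. -/
def rTrans (T : TimedGame) (q : T.Omega) (m : T.RMove) (q' : T.Omega) : Prop :=
  T.preTrans q m q' ∧ T.tildeS q ∧ T.tildeS q' ∧
  (fun c => q.1.2 c + m.1) ∈ m.2.1.2.1

/-- The arena of pre-runs over `Ω`. -/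
def preArena (T : TimedGame) : Arena T.Omega T.RMove where
  Tr := T.preTrans
  cost := fun _ m => m.1
  IsMin := fun q => q.2.1 ∈ T.LMin

/-- Finite pre-runs. -/
abbrev PreRunF (T : TimedGame) : Type := (T.preArena).FinRun

/-- Pre-strategies of Min. -/
abbrev MinPre (T : TimedGame) : Type := (T.preArena).MinStrategy

/-- Pre-strategies of Max. -/
abbrev MaxPre (T : TimedGame) : Type := (T.preArena).MaxStrategy

/-- A pre-strategy of Min is a strategy in the closed region graph `T̄`
if it always waits into the closure of the chosen intermediate region. -/
def MinClosed (T : TimedGame) (μ : T.MinPre) : Prop :=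
  ∀ r : T.PreRunF,
    (fun c => (Arena.FinRun.last r).1.2 c + (μ.1 r).1) ∈ closure (μ.1 r).2.1.2.1

def MaxClosed (T : TimedGame) (χ : T.MaxPre) : Prop :=
  ∀ r : T.PreRunF,
    (fun c => (Arena.FinRun.last r).1.2 c + (χ.1 r).1) ∈ closure (χ.1 r).2.1.2.1

/-- Admissible strategies: strategies in the region graph `T̃`. -/
def MinAdmissible (T : TimedGame) (μ : T.MinPre) : Prop :=
  ∀ r : T.PreRunF,
    (fun c => (Arena.FinRun.last r).1.2 c + (μ.1 r).1) ∈ (μ.1 r).2.1.2.1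

def MaxAdmissible (T : TimedGame) (χ : T.MaxPre) : Prop :=
  ∀ r : T.PreRunF,
    (fun c => (Arena.FinRun.last r).1.2 c + (χ.1 r).1) ∈ (χ.1 r).2.1.2.1

/-- Boundary strategies of Min: the delay is the **infimum** of the delays
reaching the closure of the chosen intermediate region. -/
def MinBoundary (T : TimedGame) (μ : T.MinPre) : Prop :=
  ∀ r : T.PreRunF,
    (μ.1 r).1 = sInf {t : ℝ | 0 ≤ t ∧
      (fun c => (Arena.FinRun.last r).1.2 c + t) ∈ closure (μ.1 r).2.1.2.1}

/-- Boundary strategies of Max: the delay is the **supremum** of the delays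
reaching the closure of the chosen intermediate region. -/
def MaxBoundary (T : TimedGame) (χ : T.MaxPre) : Prop :=
  ∀ r : T.PreRunF,
    (χ.1 r).1 = sSup {t : ℝ | 0 ≤ t ∧
      (fun c => (Arena.FinRun.last r).1.2 c + t) ∈ closure (χ.1 r).2.1.2.1}

/-- The sequence of regions visited by a finite pre-run (its type, part 1). -/
def typeConfs (T : TimedGame) (r : T.PreRunF) : ℕ → Option T.Region :=
  fun i => if h : i < r.n + 1 then some ((r.q ⟨i, h⟩).2) else none

/-- The sequence of intermediate regions and actions of a finite pre-run
(its type, part 2). -/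
def typeMoves (T : TimedGame) (r : T.PreRunF) : ℕ → Option (T.Region × T.A) :=
  fun i => if h : i < r.n then some ((r.m ⟨i, h⟩).2) else none

/-- Two finite pre-runs have the same type. -/
def sameType (T : TimedGame) (r r' : T.PreRunF) : Prop :=
  T.typeConfs r = T.typeConfs r' ∧ T.typeMoves r = T.typeMoves r'

/-- The waiting time `t(s, α)` of the boundary timed action `α = (b, c, a)`. -/
def tOf (T : TimedGame) (s : T.Q) (α : ℕ × T.C × T.A) : ℝ :=
  if s.2 α.2.1 ≤ (α.1 : ℝ) then (α.1 : ℝ) - s.2 α.2.1 else 0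

/-- Type-preserving boundary strategies of Min: runs of the same type are
assigned the same intermediate region, action and boundary timed action. -/
def MinTP (T : TimedGame) (μ : T.MinPre) : Prop :=
  T.MinBoundary μ ∧
  ∀ r r' : T.PreRunF, T.sameType r r' →
    (μ.1 r).2 = (μ.1 r').2 ∧
    ∃ (b : ℕ) (c : T.C), b ≤ T.k ∧
      (μ.1 r).1 = T.tOf (Arena.FinRun.last r).1 (b, c, (μ.1 r).2.2) ∧
      (μ.1 r').1 = T.tOf (Arena.FinRun.last r').1 (b, c, (μ.1 r').2.2)

def MaxTP (T : TimedGame) (χ : T.MaxPre) : Prop :=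
  T.MaxBoundary χ ∧
  ∀ r r' : T.PreRunF, T.sameType r r' →
    (χ.1 r).2 = (χ.1 r').2 ∧
    ∃ (b : ℕ) (c : T.C), b ≤ T.k ∧
      (χ.1 r).1 = T.tOf (Arena.FinRun.last r).1 (b, c, (χ.1 r).2.2) ∧
      (χ.1 r').1 = T.tOf (Arena.FinRun.last r').1 (b, c, (χ.1 r').2.2)

/-- `μ_ε` is `ε`-close to the type-preserving boundary strategy `μ` of Min. -/
def EpsCloseMin (T : TimedGame) (μ με : T.MinPre) (ε : ℝ) : Prop :=
  ∀ r : T.PreRunF, (με.1 r).2 = (μ.1 r).2 ∧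
    (fun c => (Arena.FinRun.last r).1.2 c + (με.1 r).1) ∈ (μ.1 r).2.1.2.1 ∧
    (με.1 r).1 ≤ (μ.1 r).1 + ε

/-- `χ_ε` is `ε`-close to the type-preserving boundary strategy `χ` of Max. -/
def EpsCloseMax (T : TimedGame) (χ χε : T.MaxPre) (ε : ℝ) : Prop :=
  ∀ r : T.PreRunF, (χε.1 r).2 = (χ.1 r).2 ∧
    (fun c => (Arena.FinRun.last r).1.2 c + (χε.1 r).1) ∈ (χ.1 r).2.1.2.1 ∧
    (χ.1 r).1 - ε ≤ (χε.1 r).1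

/-- Upper value of the game on the subgraph of region graphs whose strategies
are the pre-strategies satisfying `PMin`, `PMax` respectively. -/
def upperG (T : TimedGame) (PMin : T.MinPre → Prop) (PMax : T.MaxPre → Prop)
    (q : T.Omega) : ℝ :=
  ⨅ μ : {μ : T.MinPre // PMin μ}, ⨆ χ : {χ : T.MaxPre // PMax χ},
    Arena.AMin T.preArena q μ.1 χ.1

/-- Lower value. -/
def lowerG (T : TimedGame) (PMin : T.MinPre → Prop) (PMax : T.MaxPre → Prop)
    (q : T.Omega) : ℝ :=
  ⨆ χ : {χ : T.MaxPre // PMax χ}, ⨅ μ : {μ : T.MinPre // PMin μ},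
    Arena.AMax T.preArena q μ.1 χ.1

def upperBar (T : TimedGame) : T.Omega → ℝ := T.upperG T.MinClosed T.MaxClosed
def lowerBar (T : TimedGame) : T.Omega → ℝ := T.lowerG T.MinClosed T.MaxClosed
/-- The value of the average-time game on the closed region graph `T̄`. -/
def valBar (T : TimedGame) : T.Omega → ℝ := T.upperBar

def upperHat (T : TimedGame) : T.Omega → ℝ := T.upperG T.MinBoundary T.MaxBoundary
def lowerHat (T : TimedGame) : T.Omega → ℝ := T.lowerG T.MinBoundary T.MaxBoundary
/-- The value of the average-time game on the boundary region graph `T̂`. -/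
def valHat (T : TimedGame) : T.Omega → ℝ := T.upperHat

def upperTilde (T : TimedGame) : T.Omega → ℝ := T.upperG T.MinAdmissible T.MaxAdmissible
def lowerTilde (T : TimedGame) : T.Omega → ℝ := T.lowerG T.MinAdmissible T.MaxAdmissible
/-- The value of the average-time game on the region graph `T̃`. -/
def valTilde (T : TimedGame) : T.Omega → ℝ := T.upperTilde

/-- A function is simple on a set `X` of configurations. -/
def SimpleOn (T : TimedGame) (X : Set T.Omega) (F : T.Omega → ℝ) : Prop :=
  (∃ e : ℤ, ∀ q ∈ X, F q = (e : ℝ)) ∨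
  (∃ (e : ℤ) (c : T.C), ∀ q ∈ X, F q = (e : ℝ) - q.1.2 c)

/-- A function on the configurations of the closed region graph is regionally
simple. -/
def RegionallySimple (T : TimedGame) (F : T.Omega → ℝ) : Prop :=
  ∀ R : T.Region, T.SimpleOn {q : T.Omega | T.barS q ∧ q.2 = R} F

/-- A function on the configurations of the closed region graph is regionally
constant. -/
def RegionallyConstant (T : TimedGame) (F : T.Omega → ℝ) : Prop :=
  ∀ R : T.Region, ∃ v : ℝ, ∀ q : T.Omega, T.barS q → q.2 = R → F q = v

/-- The configuration `(s, [s])` of the region graphs determined by a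
configuration `s` of the timed automaton. -/
def confOf (T : TimedGame) (s : T.Q) : T.Omega := (s, T.regionOf s)

/-- A region is thin if some clock has an integer value throughout its closure. -/
def Thin (T : TimedGame) (R : T.Region) : Prop :=
  ∃ c : T.C, ∀ ν ∈ closure R.2.1, ∃ m : ℤ, ν c = (m : ℝ)

/-- `R'` is the immediate time successor of `R`. -/
def ImmTimeSucc (T : TimedGame) (R R' : T.Region) : Prop :=
  R.1 = R'.1 ∧ ∀ ν ∈ R.2.1, ∃ ε : ℝ, 0 < ε ∧
    ∀ t : ℝ, 0 < t → t < ε → (fun c => ν c + t) ∈ R'.2.1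

end TimedGame


namespace ATGProof

/-! ### Arithmetic core: trichotomy equivalence at all integer levels -/

/-- `x` and `x'` satisfy the same comparisons with every integer. -/
def Trich (x x' : ℝ) : Prop :=
  ∀ m : ℤ, (x < m ↔ x' < m) ∧ (x = (m : ℝ) ↔ x' = (m : ℝ)) ∧ ((m : ℝ) < x ↔ (m : ℝ) < x')

/-- Region equivalence at all integer levels for valuations over `D`. -/
def DEq {D : Type} (ν ν' : D → ℝ) : Prop :=
  ∀ d e : D, Trich (ν d) (ν' d) ∧ Trich (ν d - ν e) (ν' d - ν' e)

theorem Trich.refl (x : ℝ) : Trich x x := fun _ => ⟨Iff.rfl, Iff.rfl, Iff.rfl⟩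

theorem Trich.symm {x x' : ℝ} (h : Trich x x') : Trich x' x := fun m =>
  ⟨(h m).1.symm, (h m).2.1.symm, (h m).2.2.symm⟩

theorem Trich.neg {x x' : ℝ} (h : Trich x x') : Trich (-x) (-x') := by
  intro m
  have h1 := (h (-m)).1
  have h2 := (h (-m)).2.1
  have h3 := (h (-m)).2.2
  push_cast at h1 h2 h3
  refine ⟨?_, ?_, ?_⟩
  · constructor <;> intro hh
    · have hx : -(m:ℝ) < x := by linarith
      have := h3.mp hx; linarith
    · have hx : -(m:ℝ) < x' := by linarith
      have := h3.mpr hx; linarith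
  · constructor <;> intro hh
    · have hx : x = -(m:ℝ) := by linarith
      have := h2.mp hx; linarith
    · have hx : x' = -(m:ℝ) := by linarith
      have := h2.mpr hx; linarith
  · constructor <;> intro hh
    · have hx : x < -(m:ℝ) := by linarith
      have := h1.mp hx; linarith
    · have hx : x' < -(m:ℝ) := by linarith
      have := h1.mpr hx; linarith

theorem Trich.le_iff {x x' : ℝ} (h : Trich x x') (m : ℤ) : x ≤ (m:ℝ) ↔ x' ≤ (m:ℝ) := by
  rw [← not_lt, ← not_lt]; exact not_congr (h m).2.2

theorem Trich.ge_iff {x x' : ℝ} (h : Trich x x') (m : ℤ) : (m:ℝ) ≤ x ↔ (m:ℝ) ≤ x' := by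
  rw [← not_lt, ← not_lt]; exact not_congr (h m).1

theorem Trich.floor_eq {x x' : ℝ} (h : Trich x x') : ⌊x⌋ = ⌊x'⌋ := by
  apply le_antisymm
  · exact Int.le_floor.mpr ((h.ge_iff ⌊x⌋).mp (Int.floor_le x))
  · exact Int.le_floor.mpr ((h.symm.ge_iff ⌊x'⌋).mp (Int.floor_le x'))

theorem Trich.int_iff {x x' : ℝ} (h : Trich x x') :
    (∃ m : ℤ, x = (m:ℝ)) ↔ (∃ m : ℤ, x' = (m:ℝ)) := by
  constructor <;> rintro ⟨m, hm⟩
  · exact ⟨m, ((h m).2.1).mp hm⟩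
  · exact ⟨m, ((h m).2.1).mpr hm⟩

theorem trich_of_floor {x x' : ℝ} (h1 : ⌊x⌋ = ⌊x'⌋)
    (h2 : (∃ m : ℤ, x = (m:ℝ)) ↔ (∃ m : ℤ, x' = (m:ℝ))) : Trich x x' := by
  intro m
  have hlt : x < (m:ℝ) ↔ x' < (m:ℝ) := by
    rw [← Int.floor_lt, ← Int.floor_lt, h1]
  have heqf : ∀ y : ℝ, (y = (m:ℝ)) ↔ (⌊y⌋ = m ∧ ∃ k : ℤ, y = (k:ℝ)) := by
    intro y
    constructor
    · rintro rfl; exact ⟨Int.floor_intCast m, ⟨m, rfl⟩⟩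
    · rintro ⟨hf, ⟨k, rfl⟩⟩
      rw [Int.floor_intCast] at hf; exact_mod_cast hf
  have heq : x = (m:ℝ) ↔ x' = (m:ℝ) := by
    rw [heqf, heqf, h1, h2]
  refine ⟨hlt, heq, ?_⟩
  rw [← not_le, ← not_le]
  apply not_congr
  rw [le_iff_lt_or_eq, le_iff_lt_or_eq]
  exact or_congr hlt heq

theorem deq_of_floor {D : Type} {ν ν' : D → ℝ}
    (hf : ∀ d, ⌊ν d⌋ = ⌊ν' d⌋)
    (hi : ∀ d, (∃ m : ℤ, ν d = (m:ℝ)) ↔ (∃ m : ℤ, ν' d = (m:ℝ)))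
    (hdf : ∀ d e, ⌊ν d - ν e⌋ = ⌊ν' d - ν' e⌋)
    (hdi : ∀ d e, (∃ m : ℤ, ν d - ν e = (m:ℝ)) ↔ (∃ m : ℤ, ν' d - ν' e = (m:ℝ))) :
    DEq ν ν' :=
  fun d e => ⟨trich_of_floor (hf d) (hi d), trich_of_floor (hdf d e) (hdi d e)⟩

theorem DEq.refl {D : Type} (ν : D → ℝ) : DEq ν ν := fun _ _ => ⟨Trich.refl _, Trich.refl _⟩

theorem DEq.symm {D : Type} {ν ν' : D → ℝ} (h : DEq ν ν') : DEq ν' ν :=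
  fun d e => ⟨(h d e).1.symm, (h d e).2.symm⟩

theorem exists_mid {α : Type} [Finite α] [Nonempty α] (l : α → ℝ)
    (h1 : ∀ d e : α, l d - l e < 1) (h2 : ∀ d : α, 0 < l d + 1) :
    ∃ t' : ℝ, 0 ≤ t' ∧ ∀ d : α, l d < t' ∧ t' < l d + 1 := by
  obtain ⟨dmax, hdmax⟩ := Finite.exists_max l
  obtain ⟨dmin, hdmin⟩ := Finite.exists_max (fun d => -l d)
  have hdmin' : ∀ d, l dmin ≤ l d := fun d => by have := hdmin d; simp at this; linarith
  have hA : max 0 (l dmax) < l dmin + 1 := by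
    apply max_lt (h2 dmin)
    have := h1 dmax dmin
    linarith
  have hB : (0:ℝ) ≤ max 0 (l dmax) := le_max_left _ _
  have hC : l dmax ≤ max 0 (l dmax) := le_max_right _ _
  refine ⟨(max 0 (l dmax) + (l dmin + 1)) / 2, by linarith, fun d => ?_⟩
  have h3 := hdmax d
  have h4 := hdmin' d
  constructor <;> linarith

/-- The delay bisimulation lemma: a delay `t` on one side can be matched by a
delay `t'` on the other side, preserving `DEq`. -/
theorem deq_shift {D : Type} [Finite D] [Nonempty D] {ν ν' : D → ℝ} (h : DEq ν ν')
    {t : ℝ} (ht : 0 ≤ t) :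
    ∃ t' : ℝ, 0 ≤ t' ∧ DEq (fun d => ν d + t) (fun d => ν' d + t') := by
  classical
  set b : D → ℝ := fun d => ν d + t with hb
  by_cases hint : ∃ d0 : D, ∃ m0 : ℤ, b d0 = (m0 : ℝ)
  · obtain ⟨d0, m0, hm0⟩ := hint
    refine ⟨(m0 : ℝ) - ν' d0, ?_, ?_⟩
    · -- ν' d0 ≤ m0 since ν d0 ≤ m0
      have h1 : ν d0 ≤ (m0 : ℝ) := by
        have : ν d0 ≤ b d0 := by simp only [hb]; linarith
        rw [hm0] at this; exact this
      have h2 : ν' d0 ≤ (m0 : ℝ) := ((h d0 d0).1.le_iff m0).mp h1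
      linarith
    · set b' : D → ℝ := fun d => ν' d + ((m0 : ℝ) - ν' d0) with hb'
      have hbd : ∀ d, b d = (m0 : ℝ) + (ν d - ν d0) := by
        intro d; simp only [hb]; have := hm0; simp [hb] at this; linarith
      have hbd' : ∀ d, b' d = (m0 : ℝ) + (ν' d - ν' d0) := by
        intro d; simp only [hb']; ring
      apply deq_of_floor
      · intro d
        rw [hbd d, hbd' d, Int.floor_intCast_add, Int.floor_intCast_add, ((h d d0).2).floor_eq]
      · intro d
        rw [hbd d, hbd' d]
        have key : ∀ y y' : ℝ, ((∃ m : ℤ, y = (m:ℝ)) ↔ (∃ m : ℤ, y' = (m:ℝ))) →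
            ((∃ m : ℤ, (m0:ℝ) + y = (m:ℝ)) ↔ (∃ m : ℤ, (m0:ℝ) + y' = (m:ℝ))) := by
          intro y y' hyy
          constructor <;> rintro ⟨m, hm⟩
          · obtain ⟨j, hj⟩ := hyy.mp ⟨m - m0, by push_cast; linarith⟩
            exact ⟨m0 + j, by push_cast; linarith⟩
          · obtain ⟨j, hj⟩ := hyy.mpr ⟨m - m0, by push_cast; linarith⟩
            exact ⟨m0 + j, by push_cast; linarith⟩
        exact key _ _ ((h d d0).2).int_iff
      · intro d e
        have h1 : b d - b e = ν d - ν e := by simp only [hb]; ring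
        have h2 : b' d - b' e = ν' d - ν' e := by simp only [hb']; ring
        rw [h1, h2]; exact ((h d e).2).floor_eq
      · intro d e
        have h1 : b d - b e = ν d - ν e := by simp only [hb]; ring
        have h2 : b' d - b' e = ν' d - ν' e := by simp only [hb']; ring
        rw [h1, h2]; exact ((h d e).2).int_iff
  · push_neg at hint
    have hstrict : ∀ d, ((⌊b d⌋ : ℝ)) < b d := by
      intro d
      rcases lt_or_eq_of_le (Int.floor_le (b d)) with h' | h'
      · exact h'
      · exact absurd h'.symm (hint d ⌊b d⌋)
    set l : D → ℝ := fun d => (⌊b d⌋ : ℝ) - ν' d with hl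
    have key1 : ∀ d e, l d - l e < 1 := by
      intro d e
      have hm : ((⌊b d⌋ - ⌊b e⌋ - 1 : ℤ) : ℝ) < ν d - ν e := by
        have h1 := hstrict d
        have h2 := Int.lt_floor_add_one (b e)
        have h3 : b d - b e = ν d - ν e := by simp only [hb]; ring
        push_cast
        linarith
      have hm' := ((h d e).2 (⌊b d⌋ - ⌊b e⌋ - 1)).2.2.mp hm
      push_cast at hm'
      simp only [hl]
      linarith
    have key2 : ∀ d, 0 < l d + 1 := by
      intro d
      have h1 : ν d < ((⌊b d⌋ + 1 : ℤ) : ℝ) := by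
        have := Int.lt_floor_add_one (b d)
        have h2 : ν d ≤ b d := by simp only [hb]; linarith
        push_cast; linarith
      have h2 := ((h d d).1 (⌊b d⌋ + 1)).1.mp h1
      push_cast at h2
      simp only [hl]
      linarith
    obtain ⟨t', ht'0, htmid⟩ := exists_mid l key1 key2
    have hub : ∀ d, l d < t' := fun d => (htmid d).1
    have hlb : ∀ d, t' < l d + 1 := fun d => (htmid d).2
    refine ⟨t', ht'0, ?_⟩
    set b' : D → ℝ := fun d => ν' d + t' with hb'
    have hfl : ∀ d, ⌊b' d⌋ = ⌊b d⌋ := by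
      intro d
      rw [Int.floor_eq_iff]
      constructor
      · have := hub d; simp only [hl] at this; simp only [hb']; linarith
      · have := hlb d; simp only [hl] at this; simp only [hb']; push_cast; linarith
    have hstrict' : ∀ d, ((⌊b' d⌋ : ℝ)) < b' d := by
      intro d
      rw [hfl d]
      have := hub d; simp only [hl] at this; simp only [hb']; linarith
    apply deq_of_floor
    · intro d; exact (hfl d).symm
    · intro d
      constructor
      · rintro ⟨m, hm⟩; exact absurd hm (hint d m)
      · rintro ⟨m, hm⟩
        exfalso
        have h1 := hstrict' d
        rw [hm, Int.floor_intCast] at h1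
        exact lt_irrefl _ h1
    · intro d e
      have h1 : b d - b e = ν d - ν e := by simp only [hb]; ring
      have h2 : b' d - b' e = ν' d - ν' e := by simp only [hb']; ring
      rw [h1, h2]; exact ((h d e).2).floor_eq
    · intro d e
      have h1 : b d - b e = ν d - ν e := by simp only [hb]; ring
      have h2 : b' d - b' e = ν' d - ν' e := by simp only [hb']; ring
      rw [h1, h2]; exact ((h d e).2).int_iff

theorem Trich.sub_zero {x x' : ℝ} (h : Trich x x') : Trich (x - 0) (x' - 0) := by
  simpa using h

theorem deq_reset {D : Type} {ν ν' : D → ℝ} (h : DEq ν ν') (P : D → Prop) :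
    DEq (fun d => if P d then 0 else ν d) (fun d => if P d then 0 else ν' d) := by
  intro d e
  by_cases hd : P d <;> by_cases he : P e <;> simp only [hd, he, if_true, if_false]
  · exact ⟨Trich.refl _, Trich.refl _⟩
  · refine ⟨Trich.refl _, ?_⟩
    have := ((h e e).1).neg
    simpa [zero_sub] using this
  · refine ⟨(h d d).1, ?_⟩
    simpa [sub_zero] using (h d d).1
  · exact h d e

/-- Augment a clock valuation with an extra (time-tracking) coordinate. -/
def augv {C : Type} (ν : C → ℝ) (y : ℝ) : Option C → ℝ := fun o => o.elim y ν

theorem deq_aug {C : Type} {ν ν' : C → ℝ} {y y' : ℝ} (h : DEq ν ν') (hy : Trich y y')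
    (hyd : ∀ c, Trich (y - ν c) (y' - ν' c)) :
    DEq (augv ν y) (augv ν' y') := by
  intro d e
  match d, e with
  | none, none =>
      refine ⟨hy, ?_⟩
      have : Trich (y - y) (y' - y') := by
        intro m
        constructor
        · simp only [sub_self]
        · constructor <;> simp only [sub_self]
      exact this
  | none, some c => exact ⟨hy, hyd c⟩
  | some c, none =>
      refine ⟨(h c c).1, ?_⟩
      have := (hyd c).neg
      have h2 : -(y - ν c) = ν c - y := by ring
      have h3 : -(y' - ν' c) = ν' c - y' := by ring
      rw [h2, h3] at this
      exact this
  | some c, some c' => exact h c c'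

theorem deq_aug_zero {C : Type} {ν ν' : C → ℝ} (h : DEq ν ν') :
    DEq (augv ν 0) (augv ν' 0) := by
  apply deq_aug h (Trich.refl 0)
  intro c
  have := ((h c c).1).neg
  simpa [zero_sub] using this

theorem deq_restrict {C : Type} {ν ν' : C → ℝ} {y y' : ℝ}
    (h : DEq (augv ν y) (augv ν' y')) : DEq ν ν' :=
  fun c c' => h (some c) (some c')

theorem deq_time {C : Type} {ν ν' : C → ℝ} {y y' : ℝ}
    (h : DEq (augv ν y) (augv ν' y')) : Trich y y' :=
  (h none none).1

/-- `DEq` implies region equivalence at any bound `k`. -/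
theorem regEq_of_deq {C : Type} {k : ℕ} {ν ν' : C → ℝ} (h : DEq ν ν') : RegEq k ν ν' := by
  intro i _ c c'
  have h1 := (h c c').1 (i : ℤ)
  have h2 := (h c c').2 (i : ℤ)
  push_cast at h1 h2
  exact ⟨h1, h2⟩

/-- Region equivalence of `k`-bounded valuations implies `DEq`. -/
theorem deq_of_regEq {C : Type} {k : ℕ} {ν ν' : C → ℝ} (hb : IsVal k ν) (hb' : IsVal k ν')
    (h : RegEq k ν ν') : DEq ν ν' := by
  have single : ∀ c : C, Trich (ν c) (ν' c) := by
    intro c m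
    rcases le_or_gt 0 m with hm0 | hm0
    · rcases le_or_gt m (k : ℤ) with hmk | hmk
      · have hi : m.toNat ≤ k := by omega
        have hc : ((m.toNat : ℕ) : ℝ) = (m : ℝ) := by
          exact_mod_cast Int.toNat_of_nonneg hm0
        have := (h m.toNat hi c c).1
        rw [hc] at this
        exact this
      · have hk : (k : ℝ) < (m : ℝ) := by exact_mod_cast hmk
        have l1 := (hb c).2
        have l2 := (hb' c).2
        exact ⟨iff_of_true (by linarith) (by linarith),
          iff_of_false (by intro hh; linarith) (by intro hh; linarith),
          iff_of_false (by intro hh; linarith) (by intro hh; linarith)⟩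
    · have hm : (m : ℝ) < 0 := by exact_mod_cast hm0
      have l1 := (hb c).1
      have l2 := (hb' c).1
      exact ⟨iff_of_false (by intro hh; linarith) (by intro hh; linarith),
        iff_of_false (by intro hh; linarith) (by intro hh; linarith),
        iff_of_true (by linarith) (by linarith)⟩
  intro c c'
  refine ⟨single c, ?_⟩
  intro m
  rcases le_or_gt 0 m with hm0 | hm0
  · rcases le_or_gt m (k : ℤ) with hmk | hmk
    · have hi : m.toNat ≤ k := by omega
      have hc : ((m.toNat : ℕ) : ℝ) = (m : ℝ) := by exact_mod_cast Int.toNat_of_nonneg hm0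
      have := (h m.toNat hi c c').2
      rw [hc] at this
      exact this
    · have hk : (k : ℝ) < (m : ℝ) := by exact_mod_cast hmk
      have l1 := (hb c).2
      have l2 := (hb' c).2
      have l3 := (hb c').1
      have l4 := (hb' c').1
      exact ⟨iff_of_true (by linarith) (by linarith),
        iff_of_false (by intro hh; linarith) (by intro hh; linarith),
        iff_of_false (by intro hh; linarith) (by intro hh; linarith)⟩
  · rcases le_or_gt (-(k : ℤ)) m with hmk | hmk
    · -- use swapped difference constraints at level (-m).toNat
      have hi : (-m).toNat ≤ k := by omega
      have hc : (((-m).toNat : ℕ) : ℝ) = -(m : ℝ) := by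
        have : ((-m).toNat : ℤ) = -m := Int.toNat_of_nonneg (by omega)
        exact_mod_cast this
      have hsw := (h (-m).toNat hi c' c).2
      rw [hc] at hsw
      obtain ⟨w1, w2, w3⟩ := hsw
      refine ⟨?_, ?_, ?_⟩
      · constructor <;> intro hh
        · have : -(m:ℝ) < ν c' - ν c := by linarith
          have := w3.mp this; linarith
        · have : -(m:ℝ) < ν' c' - ν' c := by linarith
          have := w3.mpr this; linarith
      · constructor <;> intro hh
        · have : ν c' - ν c = -(m:ℝ) := by linarith
          have := w2.mp this; linarith
        · have : ν' c' - ν' c = -(m:ℝ) := by linarith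
          have := w2.mpr this; linarith
      · constructor <;> intro hh
        · have : ν c' - ν c < -(m:ℝ) := by linarith
          have := w1.mp this; linarith
        · have : ν' c' - ν' c < -(m:ℝ) := by linarith
          have := w1.mpr this; linarith
    · have hk : (m : ℝ) < -(k : ℝ) := by
        have : (m:ℝ) < ((-(k:ℤ) : ℤ) : ℝ) := by exact_mod_cast hmk
        push_cast at this; linarith
      have l1 := (hb c).1
      have l2 := (hb c').2
      have l3 := (hb' c).1
      have l4 := (hb' c').2
      exact ⟨iff_of_false (by intro hh; linarith) (by intro hh; linarith),
        iff_of_false (by intro hh; linarith) (by intro hh; linarith),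
        iff_of_true (by linarith) (by linarith)⟩

theorem regEq_refl {C : Type} {k : ℕ} (ν : C → ℝ) : RegEq k ν ν :=
  fun _ _ _ _ => ⟨⟨Iff.rfl, Iff.rfl, Iff.rfl⟩, Iff.rfl, Iff.rfl, Iff.rfl⟩

/-! ### One-step bisimulation for the timed-automaton arena -/

theorem augv_shift {C : Type} (ν : C → ℝ) (y t : ℝ) :
    (fun d => augv ν y d + t) = augv (fun c => ν c + t) (y + t) := by
  funext o; cases o <;> rfl

theorem step_sim (T : TimedGame) {x y : T.Q} (hy : y ∈ T.S) {Tx Ty : ℝ}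
    (hloc : x.1 = y.1) (hdeq : DEq (augv x.2 Tx) (augv y.2 Ty))
    {m : ℝ × T.A} {p : T.Q} (hTr : T.Trans x m p) :
    ∃ t' : ℝ, 0 ≤ t' ∧ T.Trans y (t', m.2) (T.tsucc y (t', m.2)) ∧
      (T.tsucc x m).1 = (T.tsucc y (t', m.2)).1 ∧
      DEq (augv (T.tsucc x m).2 (Tx + m.1)) (augv (T.tsucc y (t', m.2)).2 (Ty + t')) := by
  haveI := T.finC
  haveI := Fintype.ofFinite T.C
  haveI : Finite (Option T.C) := inferInstance
  obtain ⟨ht0, hstay, hEn, hps, hpS⟩ := hTr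
  obtain ⟨t', ht'0, hsh⟩ := deq_shift hdeq ht0
  rw [augv_shift, augv_shift] at hsh
  have clockDEq : DEq (fun c => x.2 c + m.1) (fun c => y.2 c + t') := deq_restrict hsh
  have hreg : RegEq T.k (fun c => x.2 c + m.1) (fun c => y.2 c + t') := regEq_of_deq clockDEq
  have hxT : (x.1, fun c => x.2 c + m.1) ∈ T.S := hstay m.1 ht0 le_rfl
  have hxT' : (y.1, fun c => x.2 c + m.1) ∈ T.S := by rw [← hloc]; exact hxT
  have hyT : (y.1, fun c => y.2 c + t') ∈ T.S := (T.S_zone.1 y.1 _ _ hreg).mp hxT'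
  have hxE' : (y.1, fun c => x.2 c + m.1) ∈ T.En m.2 := by rw [← hloc]; exact hEn
  have hyE : (y.1, fun c => y.2 c + t') ∈ T.En m.2 := ((T.En_zone m.2).1 y.1 _ _ hreg).mp hxE'
  have hy0 : (y.1, y.2) ∈ T.S := by simpa using hy
  have stay' : ∀ u, 0 ≤ u → u ≤ t' → (y.1, fun c => y.2 c + u) ∈ T.S := by
    intro u hu0 hut
    rcases eq_or_lt_of_le ht'0 with h0 | h0
    · have hu : u = 0 := le_antisymm (by rw [← h0] at hut; exact hut) hu0
      subst hu
      have : (fun c => y.2 c + 0) = y.2 := by funext c; ring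
      rw [this]; exact hy0
    · have hcv := T.S_zone.2 y.1
      have hmem := hcv (x := y.2) (y := fun c => y.2 c + t') hy0 hyT
        (a := 1 - u / t') (b := u / t')
        (by have : u / t' ≤ 1 := by rw [div_le_one h0]; exact hut
            linarith)
        (div_nonneg hu0 (le_of_lt h0))
        (by ring)
      have heq : (1 - u / t') • y.2 + (u / t') • (fun c => y.2 c + t')
          = fun c => y.2 c + u := by
        funext c
        simp only [Pi.add_apply, Pi.smul_apply, smul_eq_mul]
        field_simp
        ring
      rw [heq] at hmem
      exact hmem
  have hrst := deq_reset hsh (fun o => o.elim False (· ∈ T.ϱ m.2))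
  have e3 : ∀ (ν : T.C → ℝ) (z : ℝ),
      (fun d => if (Option.elim d False (· ∈ T.ϱ m.2)) then 0 else augv ν z d)
        = augv (T.resetv ν (T.ϱ m.2)) z := by
    intro ν z
    funext o
    cases o with
    | none => simp [augv]
    | some c => by_cases hc : c ∈ T.ϱ m.2 <;> simp [augv, TimedGame.resetv, hc]
  rw [e3, e3] at hrst
  have hrreg : RegEq T.k (T.resetv (fun c => x.2 c + m.1) (T.ϱ m.2))
      (T.resetv (fun c => y.2 c + t') (T.ϱ m.2)) := regEq_of_deq (deq_restrict hrst)
  have hxsS : (T.δ y.1 m.2, T.resetv (fun c => x.2 c + m.1) (T.ϱ m.2)) ∈ T.S := by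
    rw [← hloc]
    rw [hps] at hpS
    exact hpS
  have hsS : T.tsucc y (t', m.2) ∈ T.S := (T.S_zone.1 (T.δ y.1 m.2) _ _ hrreg).mp hxsS
  refine ⟨t', ht'0, ⟨ht'0, stay', hyE, rfl, hsS⟩, ?_, ?_⟩
  · show T.δ x.1 m.2 = T.δ y.1 m.2
    rw [hloc]
  · exact hrst

/-! ### Arena infrastructure -/

section ArenaInfra

variable {Conf Move : Type} {G : Arena Conf Move}

theorem finrun_ext {r r' : G.FinRun} (hn : r.n = r'.n)
    (hq : ∀ (i : ℕ) (hi : i < r.n + 1) (hi' : i < r'.n + 1), r.q ⟨i, hi⟩ = r'.q ⟨i, hi'⟩)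
    (hm : ∀ (i : ℕ) (hi : i < r.n) (hi' : i < r'.n), r.m ⟨i, hi⟩ = r'.m ⟨i, hi'⟩) :
    r = r' := by
  obtain ⟨n, q, m, v⟩ := r
  obtain ⟨n', q', m', v'⟩ := r'
  simp only at hn hq hm
  subst hn
  have hq' : q = q' := by
    funext i
    have := hq i.1 i.isLt i.isLt
    simpa using this
  have hm' : m = m' := by
    funext i
    have := hm i.1 i.isLt i.isLt
    simpa using this
  subst hq'
  subst hm'
  rfl

theorem extend_congr {r : G.FinRun} {mv : Move} {p q : Conf} (hpq : p = q)
    (h1 : G.Tr r.last mv p) (h2 : G.Tr r.last mv q) :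
    r.extend mv p h1 = r.extend mv q h2 := by
  subst hpq; rfl

theorem last_single (q0 : Conf) : (G.single q0).last = q0 := rfl

theorem n_single (q0 : Conf) : (G.single q0).n = 0 := rfl

theorem time_single (q0 : Conf) : (G.single q0).time = 0 := by
  simp [Arena.FinRun.time, Arena.single]
  exact Finset.sum_eq_zero (fun i _ => i.elim0)

theorem last_extend (r : G.FinRun) (mv : Move) (q : Conf) (h : G.Tr r.last mv q) :
    (r.extend mv q h).last = q := by
  simp [Arena.FinRun.last, Arena.FinRun.extend, Fin.snoc_last]

theorem n_extend (r : G.FinRun) (mv : Move) (q : Conf) (h : G.Tr r.last mv q) :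
    (r.extend mv q h).n = r.n + 1 := rfl

theorem time_extend (r : G.FinRun) (mv : Move) (q : Conf) (h : G.Tr r.last mv q) :
    (r.extend mv q h).time = r.time + G.cost r.last mv := by
  simp only [Arena.FinRun.time, Arena.FinRun.extend]
  erw [Fin.sum_univ_castSucc]
  simp [Fin.snoc_castSucc, Fin.snoc_last, Arena.FinRun.last]

/-- Truncation of a finite run (dropping the last transition). -/
def truncF (r : G.FinRun) : G.FinRun :=
  if h : r.n = 0 then r else
    { n := r.n - 1
      q := fun i => r.q (Fin.castLE (by omega) i)
      m := fun i => r.m (Fin.castLE (by omega) i)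
      valid := fun i => r.valid (Fin.castLE (by omega) i) }

/-- The last move of a nonempty finite run. -/
def lastMv (r : G.FinRun) (h : r.n ≠ 0) : Move := r.m ⟨r.n - 1, by omega⟩

end ArenaInfra

section ArenaInfra2

variable {Conf Move : Type} {G : Arena Conf Move}

theorem snoc_lt_eq {n : ℕ} {α : Type _} (p : Fin n → α) (x : α) (j : Fin (n + 1))
    (i : ℕ) (hi : i < n) (hval : j.1 = i) :
    Fin.snoc (α := fun _ => α) p x j = p ⟨i, hi⟩ := by
  have hj : j = (⟨i, hi⟩ : Fin n).castSucc := by apply Fin.ext; simpa using hval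
  rw [hj, Fin.snoc_castSucc]

theorem snoc_last_eq {n : ℕ} {α : Type _} (p : Fin n → α) (x : α) (j : Fin (n + 1))
    (hval : j.1 = n) : Fin.snoc (α := fun _ => α) p x j = x := by
  have hj : j = Fin.last n := by apply Fin.ext; simpa using hval
  rw [hj, Fin.snoc_last]

theorem truncF_extend (r : G.FinRun) (mv : Move) (q : Conf) (h : G.Tr r.last mv q) :
    truncF (r.extend mv q h) = r := by
  have hne : (r.extend mv q h).n ≠ 0 := by simp [Arena.FinRun.extend]
  rw [truncF, dif_neg hne]
  apply finrun_ext
  · simp [Arena.FinRun.extend]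
  · intro i hi hi'
    dsimp only [Arena.FinRun.extend]
    exact snoc_lt_eq r.q q _ i hi' rfl
  · intro i hi hi'
    dsimp only [Arena.FinRun.extend]
    exact snoc_lt_eq r.m mv _ i hi' rfl

theorem lastMv_extend (r : G.FinRun) (mv : Move) (q : Conf) (h : G.Tr r.last mv q)
    (hne : (r.extend mv q h).n ≠ 0) :
    lastMv (r.extend mv q h) hne = mv := by
  unfold lastMv
  dsimp only [Arena.FinRun.extend]
  exact snoc_last_eq r.m mv _ (by simp)

theorem play_n (μ : G.MinStrategy) (χ : G.MaxStrategy) (q0 : Conf) (n : ℕ) :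
    (G.play μ χ q0 n).n = n := by
  induction n with
  | zero => rfl
  | succ n ih =>
      rw [Arena.play]
      split <;> simp [Arena.FinRun.extend, ih]

end ArenaInfra2

/-! ### Timed-game specific arena lemmas -/

section TGame

variable (T : TimedGame)

theorem tr_def {q p : {s : T.Q // s ∈ T.S}} {mv : ℝ × T.A} :
    (T.taArena).Tr q mv p ↔ T.Trans q.1 mv p.1 := Iff.rfl

theorem isMin_def (q : {s : T.Q // s ∈ T.S}) :
    (T.taArena).IsMin q ↔ q.1.1 ∈ T.LMin := Iff.rfl

theorem tr_succ {q p : {s : T.Q // s ∈ T.S}} {mv : ℝ × T.A}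
    (h : (T.taArena).Tr q mv p) : p.1 = T.tsucc q.1 mv := by
  have h' : T.Trans q.1 mv p.1 := h
  exact h'.2.2.2.1

theorem tr_unique {q p p' : {s : T.Q // s ∈ T.S}} {mv : ℝ × T.A}
    (h : (T.taArena).Tr q mv p) (h' : (T.taArena).Tr q mv p') : p = p' := by
  apply Subtype.ext
  rw [tr_succ T h, tr_succ T h']

theorem exists_tr (q : {s : T.Q // s ∈ T.S}) :
    ∃ (mv : ℝ × T.A) (p : {s : T.Q // s ∈ T.S}), (T.taArena).Tr q mv p := by
  obtain ⟨t, a, ht, hstay, hEn, hsucc⟩ := T.nonstuck q.1 q.2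
  have hmem : T.tsucc q.1 (t, a) ∈ T.S := hsucc
  refine ⟨(t, a), ⟨T.tsucc q.1 (t, a), hmem⟩, ?_⟩
  exact ⟨ht, hstay, hEn, rfl, hmem⟩

/-- A default available move at every configuration. -/
noncomputable def defaultMv (q : {s : T.Q // s ∈ T.S}) : ℝ × T.A :=
  (exists_tr T q).choose

theorem defaultMv_spec (q : {s : T.Q // s ∈ T.S}) :
    ∃ p, (T.taArena).Tr q (defaultMv T q) p :=
  (exists_tr T q).choose_spec

instance : Nonempty ((T.taArena).MinStrategy) :=
  ⟨⟨fun r => defaultMv T r.last, fun r _ => defaultMv_spec T r.last⟩⟩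

instance : Nonempty ((T.taArena).MaxStrategy) :=
  ⟨⟨fun r => defaultMv T r.last, fun r _ => defaultMv_spec T r.last⟩⟩

/-- The coupling relation on timed configurations with accumulated times. -/
def rel (x : T.Q) (Tx : ℝ) (y : T.Q) (Ty : ℝ) : Prop :=
  x.1 = y.1 ∧ DEq (augv x.2 Tx) (augv y.2 Ty)

theorem rel_symm {T : TimedGame} {x y : T.Q} {Tx Ty : ℝ} (h : rel T x Tx y Ty) :
    rel T y Ty x Tx := ⟨h.1.symm, h.2.symm⟩

theorem step_sim' {T : TimedGame} {x y : T.Q} (hy : y ∈ T.S) {Tx Ty : ℝ}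
    (hr : rel T x Tx y Ty) {mv : ℝ × T.A} {p : T.Q} (hTr : T.Trans x mv p) :
    ∃ mv' : ℝ × T.A, T.Trans y mv' (T.tsucc y mv') ∧
      rel T (T.tsucc x mv) (Tx + mv.1) (T.tsucc y mv') (Ty + mv'.1) := by
  obtain ⟨t', _, htr, hloc, hdeq⟩ := step_sim T hy hr.1 hr.2 hTr
  exact ⟨(t', mv.2), htr, hloc, hdeq⟩

/-- Translation of a move across the coupling relation. -/
noncomputable def transl (x y : {s : T.Q // s ∈ T.S}) (Tx Ty : ℝ) (mv : ℝ × T.A) :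
    ℝ × T.A :=
  if h : rel T x.1 Tx y.1 Ty ∧ ∃ p, (T.taArena).Tr x mv p then
    (step_sim' y.2 h.1 h.2.choose_spec).choose
  else defaultMv T y

theorem transl_spec {T : TimedGame} {x y : {s : T.Q // s ∈ T.S}} {Tx Ty : ℝ}
    {mv : ℝ × T.A} (hr : rel T x.1 Tx y.1 Ty) (hav : ∃ p, (T.taArena).Tr x mv p) :
    T.Trans y.1 (transl T x y Tx Ty mv) (T.tsucc y.1 (transl T x y Tx Ty mv)) ∧
      rel T (T.tsucc x.1 mv) (Tx + mv.1)
        (T.tsucc y.1 (transl T x y Tx Ty mv)) (Ty + (transl T x y Tx Ty mv).1) := by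
  rw [transl, dif_pos ⟨hr, hav⟩]
  exact (step_sim' y.2 hr hav.choose_spec).choose_spec

theorem transl_avail (x y : {s : T.Q // s ∈ T.S}) (Tx Ty : ℝ) (mv : ℝ × T.A) :
    ∃ p, (T.taArena).Tr y (transl T x y Tx Ty mv) p := by
  rw [transl]
  split
  case isTrue h =>
    have hspec := (step_sim' y.2 h.1 h.2.choose_spec).choose_spec
    obtain ⟨htr, _⟩ := hspec
    exact ⟨⟨_, htr.2.2.2.2⟩, htr⟩
  case isFalse h => exact defaultMv_spec T y

end TGame

/-! ### The simulation of plays across the coupling relation -/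

theorem play_succ {Conf Move : Type} (G : Arena Conf Move) (μ : G.MinStrategy)
    (χ : G.MaxStrategy) (q0 : Conf) (n : ℕ) :
    G.play μ χ q0 (n + 1) =
      (if h : G.IsMin (G.play μ χ q0 n).last then
        (G.play μ χ q0 n).extend (μ.1 (G.play μ χ q0 n))
          (Classical.choose (μ.2 (G.play μ χ q0 n) h))
          (Classical.choose_spec (μ.2 (G.play μ χ q0 n) h))
      else
        (G.play μ χ q0 n).extend (χ.1 (G.play μ χ q0 n))
          (Classical.choose (χ.2 (G.play μ χ q0 n) h))
          (Classical.choose_spec (χ.2 (G.play μ χ q0 n) h))) := rfl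

section Psi

variable (T : TimedGame)

/-- Extend a run by a move if it is available (and do nothing otherwise). -/
noncomputable def extendA (r : (T.taArena).FinRun) (mv : ℝ × T.A) : (T.taArena).FinRun :=
  if h : ∃ p, (T.taArena).Tr r.last mv p then r.extend mv h.choose h.choose_spec else r

theorem extendA_eq {r : (T.taArena).FinRun} {mv : ℝ × T.A} {p : {s : T.Q // s ∈ T.S}}
    (h : (T.taArena).Tr r.last mv p) : extendA T r mv = r.extend mv p h := by
  rw [extendA, dif_pos ⟨p, h⟩]
  exact extend_congr (tr_unique T (Exists.choose_spec (⟨p, h⟩ : ∃ q, (T.taArena).Tr r.last mv q)) h) _ _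

/-- The simulated (primed) run corresponding to a given run. -/
noncomputable def psi (μ' : (T.taArena).MinStrategy) (y0 : {s : T.Q // s ∈ T.S})
    (r : (T.taArena).FinRun) : (T.taArena).FinRun :=
  if h : r.n = 0 then (T.taArena).single y0
  else if (T.taArena).IsMin (psi μ' y0 (truncF r)).last then
    extendA T (psi μ' y0 (truncF r)) (μ'.1 (psi μ' y0 (truncF r)))
  else extendA T (psi μ' y0 (truncF r))
      (transl T (truncF r).last (psi μ' y0 (truncF r)).last (truncF r).time
        (psi μ' y0 (truncF r)).time (lastMv r h))
  termination_by r.n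
  decreasing_by all_goals (simp [truncF, h]; omega)

theorem psi_zero (μ' : (T.taArena).MinStrategy) (y0 : {s : T.Q // s ∈ T.S})
    (r : (T.taArena).FinRun) (h : r.n = 0) : psi T μ' y0 r = (T.taArena).single y0 := by
  rw [psi.eq_def, dif_pos h]

theorem psi_succ (μ' : (T.taArena).MinStrategy) (y0 : {s : T.Q // s ∈ T.S})
    (r : (T.taArena).FinRun) (h : r.n ≠ 0) :
    psi T μ' y0 r =
      (if (T.taArena).IsMin (psi T μ' y0 (truncF r)).last then
        extendA T (psi T μ' y0 (truncF r)) (μ'.1 (psi T μ' y0 (truncF r)))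
      else extendA T (psi T μ' y0 (truncF r))
        (transl T (truncF r).last (psi T μ' y0 (truncF r)).last (truncF r).time
          (psi T μ' y0 (truncF r)).time (lastMv r h))) := by
  rw [psi.eq_def, dif_neg h]

/-- The simulating strategy for Min. -/
noncomputable def simMin (μ' : (T.taArena).MinStrategy) (y0 : {s : T.Q // s ∈ T.S}) :
    (T.taArena).MinStrategy :=
  ⟨fun r => transl T (psi T μ' y0 r).last r.last (psi T μ' y0 r).time r.time
      (μ'.1 (psi T μ' y0 r)),
   fun r _ => transl_avail T _ _ _ _ _⟩

/-- The simulating strategy for Max. -/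
noncomputable def simMax (μ : (T.taArena).MinStrategy) (χ : (T.taArena).MaxStrategy)
    (x0 : {s : T.Q // s ∈ T.S}) : (T.taArena).MaxStrategy :=
  ⟨fun r' => transl T ((T.taArena).play μ χ x0 r'.n).last r'.last
      ((T.taArena).play μ χ x0 r'.n).time r'.time (χ.1 ((T.taArena).play μ χ x0 r'.n)),
   fun r' _ => transl_avail T _ _ _ _ _⟩

theorem coupling (μ' : (T.taArena).MinStrategy) (y0 x0 : {s : T.Q // s ∈ T.S})
    (χ : (T.taArena).MaxStrategy) (hr0 : rel T x0.1 0 y0.1 0) (n : ℕ) :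
    psi T μ' y0 ((T.taArena).play (simMin T μ' y0) χ x0 n)
        = (T.taArena).play μ' (simMax T (simMin T μ' y0) χ x0) y0 n ∧
      rel T ((T.taArena).play (simMin T μ' y0) χ x0 n).last.1
        ((T.taArena).play (simMin T μ' y0) χ x0 n).time
        ((T.taArena).play μ' (simMax T (simMin T μ' y0) χ x0) y0 n).last.1
        ((T.taArena).play μ' (simMax T (simMin T μ' y0) χ x0) y0 n).time := by
  set μ := simMin T μ' y0 with hμ
  set χ' := simMax T μ χ x0 with hχ'
  induction n with
  | zero =>
      constructor
      · exact psi_zero T μ' y0 _ rfl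
      · show rel T x0.1 ((T.taArena).single x0).time y0.1 ((T.taArena).single y0).time
        rw [time_single, time_single]
        exact hr0
  | succ n ih =>
      obtain ⟨ihpsi, ihrel⟩ := ih
      set r := (T.taArena).play μ χ x0 n with hr
      set r' := (T.taArena).play μ' χ' y0 n with hrr'
      have hminiff : (T.taArena).IsMin r.last ↔ (T.taArena).IsMin r'.last := by
        rw [isMin_def, isMin_def, ihrel.1]
      by_cases hM : (T.taArena).IsMin r.last
      · -- Min moves
        have hM' : (T.taArena).IsMin r'.last := hminiff.mp hM
        have hq := Classical.choose_spec (μ.2 r hM)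
        have hq' := Classical.choose_spec (μ'.2 r' hM')
        have hplay : (T.taArena).play μ χ x0 (n+1)
            = r.extend (μ.1 r) (Classical.choose (μ.2 r hM)) hq := by
          rw [play_succ, dif_pos hM]
        have hplay' : (T.taArena).play μ' χ' y0 (n+1)
            = r'.extend (μ'.1 r') (Classical.choose (μ'.2 r' hM')) hq' := by
          rw [play_succ, dif_pos hM']
        have hmv : μ.1 r = transl T r'.last r.last r'.time r.time (μ'.1 r') := by
          rw [hμ]
          show transl T (psi T μ' y0 r).last r.last (psi T μ' y0 r).time r.time
            (μ'.1 (psi T μ' y0 r)) = _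
          rw [ihpsi]
        have havail' : ∃ p, (T.taArena).Tr r'.last (μ'.1 r') p := μ'.2 r' hM'
        have hspec := transl_spec (rel_symm ihrel) havail'
        rw [← hmv] at hspec
        have hne : ((T.taArena).play μ χ x0 (n+1)).n ≠ 0 := by
          rw [play_n]; omega
        have hpsi1 : psi T μ' y0 ((T.taArena).play μ χ x0 (n+1))
            = (T.taArena).play μ' χ' y0 (n+1) := by
          rw [psi_succ T μ' y0 _ hne]
          have htr : truncF ((T.taArena).play μ χ x0 (n+1)) = r := by
            rw [hplay]; exact truncF_extend r _ _ _
          rw [htr, ihpsi, if_pos hM', hplay']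
          exact extendA_eq T hq'
        refine ⟨hpsi1, ?_⟩
        have hlast : ((T.taArena).play μ χ x0 (n+1)).last.1 = T.tsucc r.last.1 (μ.1 r) := by
          rw [hplay, last_extend]
          exact tr_succ T hq
        have hlast' : ((T.taArena).play μ' χ' y0 (n+1)).last.1
            = T.tsucc r'.last.1 (μ'.1 r') := by
          rw [hplay', last_extend]
          exact tr_succ T hq'
        have htime : ((T.taArena).play μ χ x0 (n+1)).time = r.time + (μ.1 r).1 := by
          rw [hplay, time_extend]; rfl
        have htime' : ((T.taArena).play μ' χ' y0 (n+1)).time = r'.time + (μ'.1 r').1 := by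
          rw [hplay', time_extend]; rfl
        rw [hlast, hlast', htime, htime']
        exact rel_symm hspec.2
      · -- Max moves
        have hM' : ¬ (T.taArena).IsMin r'.last := fun hc => hM (hminiff.mpr hc)
        have hq := Classical.choose_spec (χ.2 r hM)
        have hq' := Classical.choose_spec (χ'.2 r' hM')
        have hplay : (T.taArena).play μ χ x0 (n+1)
            = r.extend (χ.1 r) (Classical.choose (χ.2 r hM)) hq := by
          rw [play_succ, dif_neg hM]
        have hplay' : (T.taArena).play μ' χ' y0 (n+1)
            = r'.extend (χ'.1 r') (Classical.choose (χ'.2 r' hM')) hq' := by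
          rw [play_succ, dif_neg hM']
        have hmv : χ'.1 r' = transl T r.last r'.last r.time r'.time (χ.1 r) := by
          rw [hχ']
          show transl T ((T.taArena).play μ χ x0 r'.n).last r'.last
            ((T.taArena).play μ χ x0 r'.n).time r'.time
            (χ.1 ((T.taArena).play μ χ x0 r'.n)) = _
          rw [hrr', play_n]
        have havail : ∃ p, (T.taArena).Tr r.last (χ.1 r) p := χ.2 r hM
        have hspec := transl_spec ihrel havail
        rw [← hmv] at hspec
        have hne : ((T.taArena).play μ χ x0 (n+1)).n ≠ 0 := by
          rw [play_n]; omega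
        have hpsi1 : psi T μ' y0 ((T.taArena).play μ χ x0 (n+1))
            = (T.taArena).play μ' χ' y0 (n+1) := by
          rw [psi_succ T μ' y0 _ hne]
          have htr : truncF ((T.taArena).play μ χ x0 (n+1)) = r := by
            rw [hplay]; exact truncF_extend r _ _ _
          have hlm : lastMv ((T.taArena).play μ χ x0 (n+1)) hne = χ.1 r := by
            revert hne
            rw [hplay]
            intro hne
            exact lastMv_extend r _ _ _ _
          rw [htr, ihpsi, if_neg hM', hplay', hlm, ← hmv]
          exact extendA_eq T hq'
        refine ⟨hpsi1, ?_⟩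
        have hlast : ((T.taArena).play μ χ x0 (n+1)).last.1 = T.tsucc r.last.1 (χ.1 r) := by
          rw [hplay, last_extend]
          exact tr_succ T hq
        have hlast' : ((T.taArena).play μ' χ' y0 (n+1)).last.1
            = T.tsucc r'.last.1 (χ'.1 r') := by
          rw [hplay', last_extend]
          exact tr_succ T hq'
        have htime : ((T.taArena).play μ χ x0 (n+1)).time = r.time + (χ.1 r).1 := by
          rw [hplay, time_extend]; rfl
        have htime' : ((T.taArena).play μ' χ' y0 (n+1)).time = r'.time + (χ'.1 r').1 := by
          rw [hplay', time_extend]; rfl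
        rw [hlast, hlast', htime, htime']
        exact hspec.2

end Psi

/-! ### Payoff comparison -/

theorem trich_abs_le {x y : ℝ} (h : Trich x y) : |x - y| ≤ 1 := by
  have hf : ((⌊x⌋ : ℤ) : ℝ) = ((⌊y⌋ : ℤ) : ℝ) := by exact_mod_cast h.floor_eq
  have h1 := Int.floor_le x
  have h2 := Int.lt_floor_add_one x
  have h3 := Int.floor_le y
  have h4 := Int.lt_floor_add_one y
  rw [abs_le]
  constructor <;> linarith

theorem mem_upper_nonneg {u : ℕ → ℝ} (hu : ∀ n, 0 ≤ u n) {a : ℝ}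
    (ha : a ∈ {a | ∀ᶠ n in Filter.atTop, u n / n ≤ a}) : 0 ≤ a := by
  have hpos : ∀ᶠ n : ℕ in Filter.atTop, 0 ≤ u n / n := by
    filter_upwards [Filter.eventually_ge_atTop 1] with n hn
    exact div_nonneg (hu n) (by positivity)
  obtain ⟨n, h1, h2⟩ := (ha.and hpos).exists
  linarith

theorem shift_mem {u v : ℕ → ℝ} (hc : ∀ n, u n ≤ v n + 1) {a ε : ℝ} (hε : 0 < ε)
    (ha : a ∈ {a | ∀ᶠ n in Filter.atTop, v n / n ≤ a}) :
    a + ε ∈ {a | ∀ᶠ n in Filter.atTop, u n / n ≤ a} := by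
  have hsmall : ∀ᶠ n : ℕ in Filter.atTop, 1 / (n : ℝ) ≤ ε := by
    rw [Filter.eventually_atTop]
    refine ⟨⌈1 / ε⌉₊ + 1, fun n hn => ?_⟩
    have hn1 : (1 : ℕ) ≤ n := by omega
    have hnpos : (0 : ℝ) < n := by exact_mod_cast Nat.lt_of_lt_of_le (by omega) hn
    rw [div_le_iff₀ hnpos]
    have hle : (1 / ε) ≤ (n : ℝ) := by
      calc (1 / ε) ≤ (⌈1 / ε⌉₊ : ℝ) := Nat.le_ceil _
        _ ≤ (n : ℝ) := by
            have : ⌈1 / ε⌉₊ ≤ n := by omega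
            exact_mod_cast this
    calc (1 : ℝ) = ε * (1 / ε) := by field_simp
      _ ≤ ε * n := by apply mul_le_mul_of_nonneg_left hle (le_of_lt hε)
  filter_upwards [ha, hsmall, Filter.eventually_ge_atTop 1] with n h1 h2 h3
  have hnpos : (0 : ℝ) < n := by exact_mod_cast h3
  have : u n / n ≤ (v n + 1) / n := (div_le_div_iff_of_pos_right hnpos).mpr (hc n)
  calc u n / n ≤ (v n + 1) / n := this
    _ = v n / n + 1 / n := by ring
    _ ≤ a + ε := add_le_add h1 h2

theorem limsup_div_eq {u v : ℕ → ℝ} (hu : ∀ n, 0 ≤ u n) (hv : ∀ n, 0 ≤ v n)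
    (hc : ∀ n, |u n - v n| ≤ 1) :
    Filter.limsup (fun n : ℕ => u n / n) Filter.atTop
      = Filter.limsup (fun n : ℕ => v n / n) Filter.atTop := by
  have hc1 : ∀ n, u n ≤ v n + 1 := fun n => by have := abs_le.mp (hc n); linarith [this.2]
  have hc2 : ∀ n, v n ≤ u n + 1 := fun n => by have := abs_le.mp (hc n); linarith [this.1]
  rw [Filter.limsup_eq, Filter.limsup_eq]
  set Su := {a | ∀ᶠ n in Filter.atTop, u n / n ≤ a} with hSu
  set Sv := {a | ∀ᶠ n in Filter.atTop, v n / n ≤ a} with hSv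
  by_cases hne : Su.Nonempty
  · have hne' : Sv.Nonempty := by
      obtain ⟨a, ha⟩ := hne
      exact ⟨a + 1, shift_mem hc2 one_pos ha⟩
    have hbu : BddBelow Su := ⟨0, fun a ha => mem_upper_nonneg hu ha⟩
    have hbv : BddBelow Sv := ⟨0, fun a ha => mem_upper_nonneg hv ha⟩
    apply le_antisymm
    · apply le_of_forall_pos_le_add
      intro ε hε
      have h1 : ∀ a ∈ Sv, sInf Su ≤ a + ε := fun a ha => csInf_le hbu (shift_mem hc1 hε ha)
      have h2 : sInf Su - ε ≤ sInf Sv :=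
        le_csInf hne' (fun a ha => by linarith [h1 a ha])
      linarith
    · apply le_of_forall_pos_le_add
      intro ε hε
      have h1 : ∀ a ∈ Su, sInf Sv ≤ a + ε := fun a ha => csInf_le hbv (shift_mem hc2 hε ha)
      have h2 : sInf Sv - ε ≤ sInf Su :=
        le_csInf hne (fun a ha => by linarith [h1 a ha])
      linarith
  · have hne' : ¬ Sv.Nonempty := by
      intro ⟨a, ha⟩
      exact hne ⟨a + 1, shift_mem hc1 one_pos ha⟩
    rw [Set.not_nonempty_iff_eq_empty] at hne hne'
    rw [hne, hne']

section Payoff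

variable (T : TimedGame)

theorem tr_cost_nonneg {q p : {s : T.Q // s ∈ T.S}} {mv : ℝ × T.A}
    (h : (T.taArena).Tr q mv p) : 0 ≤ mv.1 := by
  have h' : T.Trans q.1 mv p.1 := h
  exact h'.1

theorem tr_cost_le (hC : Nonempty T.C) {q p : {s : T.Q // s ∈ T.S}} {mv : ℝ × T.A}
    (h : (T.taArena).Tr q mv p) : mv.1 ≤ (T.k : ℝ) := by
  have h' : T.Trans q.1 mv p.1 := h
  obtain ⟨c⟩ := hC
  have hmem : (q.1.1, fun c => q.1.2 c + mv.1) ∈ T.S := h'.2.1 mv.1 h'.1 le_rfl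
  have h1 := (T.bounded _ hmem c).2
  have h2 := (T.bounded _ q.2 c).1
  simp only at h1
  linarith

theorem play_time_nonneg (μ : (T.taArena).MinStrategy) (χ : (T.taArena).MaxStrategy)
    (x0 : {s : T.Q // s ∈ T.S}) (n : ℕ) : 0 ≤ ((T.taArena).play μ χ x0 n).time := by
  induction n with
  | zero => rw [show (T.taArena).play μ χ x0 0 = (T.taArena).single x0 from rfl, time_single]
  | succ n ih =>
      rw [play_succ]
      split
      case isTrue hM =>
        rw [time_extend]
        have := tr_cost_nonneg T (Classical.choose_spec (μ.2 ((T.taArena).play μ χ x0 n) hM))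
        have hcost : (T.taArena).cost ((T.taArena).play μ χ x0 n).last
            (μ.1 ((T.taArena).play μ χ x0 n)) = (μ.1 ((T.taArena).play μ χ x0 n)).1 := rfl
        rw [hcost]; linarith
      case isFalse hM =>
        rw [time_extend]
        have := tr_cost_nonneg T (Classical.choose_spec (χ.2 ((T.taArena).play μ χ x0 n) hM))
        have hcost : (T.taArena).cost ((T.taArena).play μ χ x0 n).last
            (χ.1 ((T.taArena).play μ χ x0 n)) = (χ.1 ((T.taArena).play μ χ x0 n)).1 := rfl
        rw [hcost]; linarith

theorem play_time_le (hC : Nonempty T.C) (μ : (T.taArena).MinStrategy)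
    (χ : (T.taArena).MaxStrategy) (x0 : {s : T.Q // s ∈ T.S}) (n : ℕ) :
    ((T.taArena).play μ χ x0 n).time ≤ n * (T.k : ℝ) := by
  induction n with
  | zero =>
      rw [show (T.taArena).play μ χ x0 0 = (T.taArena).single x0 from rfl, time_single]
      simp
  | succ n ih =>
      rw [play_succ]
      split
      case isTrue hM =>
        rw [time_extend]
        have := tr_cost_le T hC (Classical.choose_spec (μ.2 ((T.taArena).play μ χ x0 n) hM))
        have hcost : (T.taArena).cost ((T.taArena).play μ χ x0 n).last
            (μ.1 ((T.taArena).play μ χ x0 n)) = (μ.1 ((T.taArena).play μ χ x0 n)).1 := rfl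
        rw [hcost]
        push_cast
        linarith
      case isFalse hM =>
        rw [time_extend]
        have := tr_cost_le T hC (Classical.choose_spec (χ.2 ((T.taArena).play μ χ x0 n) hM))
        have hcost : (T.taArena).cost ((T.taArena).play μ χ x0 n).last
            (χ.1 ((T.taArena).play μ χ x0 n)) = (χ.1 ((T.taArena).play μ χ x0 n)).1 := rfl
        rw [hcost]
        push_cast
        linarith

theorem aMin_nonneg (μ : (T.taArena).MinStrategy) (χ : (T.taArena).MaxStrategy)
    (x0 : {s : T.Q // s ∈ T.S}) : 0 ≤ (T.taArena).AMin x0 μ χ := by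
  rw [Arena.AMin, Filter.limsup_eq]
  set Su := {a | ∀ᶠ n in Filter.atTop, ((T.taArena).play μ χ x0 n).time / n ≤ a} with hSu
  by_cases hne : Su.Nonempty
  · exact le_csInf hne (fun a ha => mem_upper_nonneg (play_time_nonneg T μ χ x0) ha)
  · rw [Set.not_nonempty_iff_eq_empty] at hne
    rw [hne, Real.sInf_empty]

theorem aMin_le_k (hC : Nonempty T.C) (μ : (T.taArena).MinStrategy)
    (χ : (T.taArena).MaxStrategy) (x0 : {s : T.Q // s ∈ T.S}) :
    (T.taArena).AMin x0 μ χ ≤ (T.k : ℝ) := by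
  rw [Arena.AMin, Filter.limsup_eq]
  have hmem : (T.k : ℝ) ∈ {a | ∀ᶠ n in Filter.atTop,
      ((T.taArena).play μ χ x0 n).time / n ≤ a} := by
    filter_upwards [Filter.eventually_ge_atTop 1] with n hn
    have hnpos : (0 : ℝ) < n := by exact_mod_cast hn
    rw [div_le_iff₀ hnpos]
    calc ((T.taArena).play μ χ x0 n).time ≤ n * (T.k : ℝ) := play_time_le T hC μ χ x0 n
      _ = (T.k : ℝ) * n := by ring
  exact csInf_le ⟨0, fun a ha => mem_upper_nonneg (play_time_nonneg T μ χ x0) ha⟩ hmem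

theorem aMin_eq (μ' : (T.taArena).MinStrategy) (y0 x0 : {s : T.Q // s ∈ T.S})
    (χ : (T.taArena).MaxStrategy) (hr0 : rel T x0.1 0 y0.1 0) :
    (T.taArena).AMin x0 (simMin T μ' y0) χ
      = (T.taArena).AMin y0 μ' (simMax T (simMin T μ' y0) χ x0) := by
  rw [Arena.AMin, Arena.AMin]
  apply limsup_div_eq
  · exact play_time_nonneg T _ _ _
  · exact play_time_nonneg T _ _ _
  · intro n
    have hcp := (coupling T μ' y0 x0 χ hr0 n).2
    exact trich_abs_le (deq_time hcp.2)

theorem upper_mono (hC : Nonempty T.C) (x0 y0 : {s : T.Q // s ∈ T.S})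
    (hr0 : rel T x0.1 0 y0.1 0) :
    (T.taArena).upperVal x0 ≤ (T.taArena).upperVal y0 := by
  rw [Arena.upperVal, Arena.upperVal]
  apply le_ciInf
  intro μ'
  have hbddAx : BddAbove (Set.range fun χ => (T.taArena).AMin x0 (simMin T μ' y0) χ) := by
    refine ⟨(T.k : ℝ), ?_⟩
    rintro _ ⟨χ, rfl⟩
    exact aMin_le_k T hC _ _ _
  have hbddAy : BddAbove (Set.range fun χ' => (T.taArena).AMin y0 μ' χ') := by
    refine ⟨(T.k : ℝ), ?_⟩
    rintro _ ⟨χ', rfl⟩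
    exact aMin_le_k T hC _ _ _
  have hbddB : BddBelow (Set.range fun μ : (T.taArena).MinStrategy =>
      ⨆ χ, (T.taArena).AMin x0 μ χ) := by
    refine ⟨0, ?_⟩
    rintro _ ⟨μ, rfl⟩
    have hb : BddAbove (Set.range fun χ => (T.taArena).AMin x0 μ χ) := by
      refine ⟨(T.k : ℝ), ?_⟩
      rintro _ ⟨χ, rfl⟩
      exact aMin_le_k T hC _ _ _
    obtain ⟨χ0⟩ : Nonempty ((T.taArena).MaxStrategy) := inferInstance
    exact le_trans (aMin_nonneg T μ χ0 x0) (le_ciSup hb χ0)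
  have h1 : ⨅ μ : (T.taArena).MinStrategy, ⨆ χ, (T.taArena).AMin x0 μ χ
      ≤ ⨆ χ, (T.taArena).AMin x0 (simMin T μ' y0) χ := ciInf_le hbddB _
  refine h1.trans ?_
  apply ciSup_le
  intro χ
  rw [aMin_eq T μ' y0 x0 χ hr0]
  exact le_ciSup hbddAy _

end Payoff

end ATGProof

/-- The value of every average-time game is regionally constant: states of the
timed automaton lying in the same region have the same value. -/
theorem averageTimeGame_value_regionally_constant (T : TimedGame)
    (s s' : T.Q) (hs : s ∈ T.S) (hs' : s' ∈ T.S)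
    (h : T.regionOf s = T.regionOf s') :
    Arena.val T.taArena ⟨s, hs⟩ = Arena.val T.taArena ⟨s', hs'⟩ := by
  classical
  have hloc : s.1 = s'.1 := congrArg (fun R : T.Region => R.1) h
  by_cases hC : Nonempty T.C
  · -- extract region equivalence from the hypothesis
    have hset : {ν' | IsVal T.k ν' ∧ RegEq T.k s.2 ν'}
        = {ν' | IsVal T.k ν' ∧ RegEq T.k s'.2 ν'} := by
      have := congrArg (fun R : T.Region => R.2.1) h
      exact this
    have hmem : s'.2 ∈ {ν' | IsVal T.k ν' ∧ RegEq T.k s'.2 ν'} :=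
      ⟨T.bounded _ hs', ATGProof.regEq_refl _⟩
    rw [← hset] at hmem
    have hreg : RegEq T.k s.2 s'.2 := hmem.2
    have hdeq : ATGProof.DEq s.2 s'.2 :=
      ATGProof.deq_of_regEq (T.bounded _ hs) (T.bounded _ hs') hreg
    have hrel : ATGProof.rel T s 0 s' 0 := ⟨hloc, ATGProof.deq_aug_zero hdeq⟩
    have h1 := ATGProof.upper_mono T hC ⟨s, hs⟩ ⟨s', hs'⟩ hrel
    have h2 := ATGProof.upper_mono T hC ⟨s', hs'⟩ ⟨s, hs⟩ (ATGProof.rel_symm hrel)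
    exact le_antisymm h1 h2
  · -- no clocks: the two states are equal
    have hval : s.2 = s'.2 := funext fun c => absurd ⟨c⟩ hC
    have hss : s = s' := Prod.ext hloc hval
    subst hss
    rfl
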